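/- If A ∈ 𝐔_m is an extreme point of 𝐔_m, then every diagonal entry a_{ii} equals 0 or 1, and every off-diagonal entry a_{ij} (i ≠ j) equals 0, 1/2, or 1. -/

import Mathlib

open Matrix Finset

def IsInU {m : ℕ} (A : Matrix (Fin m) (Fin m) ℝ) : Prop :=
  A.IsSymm ∧ (∀ i j, 0 ≤ A i j) ∧
    ∀ α : Finset (Fin m), ∑ i ∈ α, ∑ j ∈ α, A i j ≤ (α.card : ℝ)

def IsInUtop {m : ℕ} (A : Matrix (Fin m) (Fin m) ℝ) : Prop :=
  IsInU A ∧ ∑ i, ∑ j, A i j = (m : ℝ)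

def IsExtremeIn {m : ℕ} (S : Matrix (Fin m) (Fin m) ℝ → Prop)
    (A : Matrix (Fin m) (Fin m) ℝ) : Prop :=
  S A ∧ ∀ A₁ A₂, S A₁ → S A₂ → A₁ + A₂ = (2 : ℝ) • A → A₁ = A ∧ A₂ = A

def IsRowStochastic {m : ℕ} (X : Matrix (Fin m) (Fin m) ℝ) : Prop :=
  (∀ i j, 0 ≤ X i j) ∧ ∀ i, ∑ j, X i j = 1

def IsSubstochastic {m : ℕ} (X : Matrix (Fin m) (Fin m) ℝ) : Prop :=
  (∀ i j, 0 ≤ X i j) ∧ ∀ i, ∑ j, X i j ≤ 1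

namespace Stmt10Aux

variable {m : ℕ}

/-- The double sum of entries of `A` over a subset `α`. -/
def Ssum (A : Matrix (Fin m) (Fin m) ℝ) (α : Finset (Fin m)) : ℝ :=
  ∑ p ∈ α, ∑ q ∈ α, A p q

lemma sum2_eq_univ (A : Matrix (Fin m) (Fin m) ℝ) (s t : Finset (Fin m)) :
    ∑ p ∈ s, ∑ q ∈ t, A p q = ∑ p, ∑ q, (if p ∈ s ∧ q ∈ t then A p q else 0) := by
  have : ∀ p : Fin m, ∑ q, (if p ∈ s ∧ q ∈ t then A p q else 0)
      = if p ∈ s then ∑ q ∈ t, A p q else 0 := by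
    intro p
    by_cases hp : p ∈ s
    · simp only [hp, true_and, if_true]
      rw [Finset.sum_ite_mem, univ_inter]
    · simp [hp]
  rw [Finset.sum_congr rfl (fun p _ => this p)]
  rw [Finset.sum_ite_mem, univ_inter]

lemma Ssum_eq_univ (A : Matrix (Fin m) (Fin m) ℝ) (α : Finset (Fin m)) :
    Ssum A α = ∑ p, ∑ q, (if p ∈ α ∧ q ∈ α then A p q else 0) :=
  sum2_eq_univ A α α

lemma Ssum_add (A B : Matrix (Fin m) (Fin m) ℝ) (α : Finset (Fin m)) :
    Ssum (A + B) α = Ssum A α + Ssum B α := by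
  simp [Ssum, Finset.sum_add_distrib, Matrix.add_apply]

lemma Ssum_smul (c : ℝ) (D : Matrix (Fin m) (Fin m) ℝ) (α : Finset (Fin m)) :
    Ssum (c • D) α = c * Ssum D α := by
  simp [Ssum, Finset.mul_sum, Matrix.smul_apply, smul_eq_mul]

lemma key_identity (A : Matrix (Fin m) (Fin m) ℝ) (hs : A.IsSymm) (α β : Finset (Fin m)) :
    Ssum A (α ∪ β) + Ssum A (α ∩ β)
      = Ssum A α + Ssum A β + 2 * ∑ p ∈ α \ β, ∑ q ∈ β \ α, A p q := by
  have hcross : ∑ p ∈ α \ β, ∑ q ∈ β \ α, A p q = ∑ p ∈ β \ α, ∑ q ∈ α \ β, A p q := by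
    refine Finset.sum_comm.trans ?_
    apply Finset.sum_congr rfl; intro p _; apply Finset.sum_congr rfl; intro q _
    exact (hs.apply q p).symm ▸ (congrFun (congrFun hs.eq q) p).symm ▸ rfl
  have h2 : (2:ℝ) * ∑ p ∈ α \ β, ∑ q ∈ β \ α, A p q
      = (∑ p ∈ α \ β, ∑ q ∈ β \ α, A p q) + ∑ p ∈ β \ α, ∑ q ∈ α \ β, A p q := by
    rw [← hcross]; ring
  rw [h2, Ssum_eq_univ A (α ∪ β), Ssum_eq_univ A (α ∩ β), Ssum_eq_univ A α, Ssum_eq_univ A β,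
    sum2_eq_univ A (α \ β) (β \ α), sum2_eq_univ A (β \ α) (α \ β)]
  rw [← Finset.sum_add_distrib]
  conv_rhs => rw [← Finset.sum_add_distrib, ← Finset.sum_add_distrib, ← Finset.sum_add_distrib]
  apply Finset.sum_congr rfl; intro p _
  rw [← Finset.sum_add_distrib]
  conv_rhs => rw [← Finset.sum_add_distrib, ← Finset.sum_add_distrib, ← Finset.sum_add_distrib]
  apply Finset.sum_congr rfl; intro q _
  by_cases h1 : p ∈ α <;> by_cases h2 : p ∈ β <;> by_cases h3 : q ∈ α <;> by_cases h4 : q ∈ β <;>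
    simp [h1, h2, h3, h4]

lemma tight_closure {A : Matrix (Fin m) (Fin m) ℝ} (hA : IsInU A) {α β : Finset (Fin m)}
    (hα : Ssum A α = α.card) (hβ : Ssum A β = β.card) :
    Ssum A (α ∪ β) = (α ∪ β).card ∧ Ssum A (α ∩ β) = (α ∩ β).card ∧
      ∀ p ∈ α \ β, ∀ q ∈ β \ α, A p q = 0 := by
  obtain ⟨hsym, hpos, hcon⟩ := hA
  have hid := key_identity A hsym α β
  have hC : 0 ≤ ∑ p ∈ α \ β, ∑ q ∈ β \ α, A p q :=
    Finset.sum_nonneg fun p _ => Finset.sum_nonneg fun q _ => hpos p q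
  have hcard : ((α ∪ β).card : ℝ) + ((α ∩ β).card : ℝ) = (α.card : ℝ) + (β.card : ℝ) := by
    exact_mod_cast congrArg (Nat.cast : ℕ → ℝ) (Finset.card_union_add_card_inter α β)
  have h1 : Ssum A (α ∪ β) ≤ (α ∪ β).card := hcon _
  have h2 : Ssum A (α ∩ β) ≤ (α ∩ β).card := hcon _
  have hCz : ∑ p ∈ α \ β, ∑ q ∈ β \ α, A p q = 0 := by
    nlinarith [hid, h1, h2, hcard, hα, hβ, hC]
  refine ⟨by nlinarith, by nlinarith, ?_⟩
  intro p hp q hq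
  have h0 : ∀ p ∈ α \ β, ∑ q ∈ β \ α, A p q = 0 := by
    intro p hp
    exact (Finset.sum_eq_zero_iff_of_nonneg
      (fun p _ => Finset.sum_nonneg fun q _ => hpos p q)).1 hCz p hp
  exact (Finset.sum_eq_zero_iff_of_nonneg (fun q _ => hpos p q)).1 (h0 p hp) q hq

lemma tight_sup {A : Matrix (Fin m) (Fin m) ℝ} (hA : IsInU A)
    (F : Finset (Finset (Fin m))) (P : Finset (Fin m) → Prop)
    (hPe : P ∅) (hPmem : ∀ γ ∈ F, P γ ∧ Ssum A γ = γ.card)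
    (hPunion : ∀ s t, P s → P t → P (s ∪ t)) :
    P (F.sup id) ∧ Ssum A (F.sup id) = (F.sup id).card := by
  have hbot : P (⊥ : Finset (Fin m)) ∧ Ssum A (⊥ : Finset (Fin m)) = ((⊥ : Finset (Fin m)).card : ℝ) := by
    refine ⟨hPe, ?_⟩
    simp [Ssum]
  have hstep : ∀ a, (P a ∧ Ssum A a = a.card) → ∀ b, (P b ∧ Ssum A b = b.card) →
      (P (a ⊔ b) ∧ Ssum A (a ⊔ b) = (a ⊔ b).card) := by
    rintro a ⟨ha, ha'⟩ b ⟨hb, hb'⟩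
    exact ⟨hPunion a b ha hb, (tight_closure hA ha' hb').1⟩
  exact Finset.sup_induction (p := fun s => P s ∧ Ssum A s = (s.card : ℝ)) hbot hstep
    (fun γ hγ => hPmem γ hγ)

lemma pert_not_extreme {A D : Matrix (Fin m) (Fin m) ℝ} (hA : IsInU A) (hDs : D.IsSymm)
    (hsupp : ∀ x y, D x y ≠ 0 → 0 < A x y) (hent : ∀ x y, |D x y| ≤ 2)
    (htight : ∀ α : Finset (Fin m), Ssum A α = α.card → Ssum D α = 0)
    (hbd : ∀ α : Finset (Fin m), |Ssum D α| ≤ 2)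
    (hne : D ≠ 0) :
    ¬ IsExtremeIn IsInU A := by
  obtain ⟨hsym, hpos, hcon⟩ := hA
  set s₁ : Finset ℝ := insert (1:ℝ)
    ((univ : Finset (Fin m × Fin m)).image fun xy =>
      if D xy.1 xy.2 = 0 then 1 else A xy.1 xy.2 / 2) with hs₁
  set s₂ : Finset ℝ := insert (1:ℝ)
    ((univ : Finset (Finset (Fin m))).image fun α =>
      if Ssum A α = α.card then 1 else ((α.card : ℝ) - Ssum A α) / 2) with hs₂
  have h₁ne : s₁.Nonempty := ⟨1, by simp [hs₁]⟩
  have h₂ne : s₂.Nonempty := ⟨1, by simp [hs₂]⟩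
  set ε : ℝ := min (s₁.min' h₁ne) (s₂.min' h₂ne) with hε
  have hε1 : 0 < s₁.min' h₁ne := by
    apply (Finset.lt_min'_iff s₁ h₁ne).2
    intro x hx
    rcases Finset.mem_insert.1 hx with h | h
    · simp [h]
    · obtain ⟨xy, _, rfl⟩ := Finset.mem_image.1 h
      by_cases hd : D xy.1 xy.2 = 0
      · simp [hd]
      · simp only [hd, if_false]
        linarith [hsupp xy.1 xy.2 hd]
  have hε2 : 0 < s₂.min' h₂ne := by
    apply (Finset.lt_min'_iff s₂ h₂ne).2
    intro x hx
    rcases Finset.mem_insert.1 hx with h | h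
    · simp [h]
    · obtain ⟨α, _, rfl⟩ := Finset.mem_image.1 h
      by_cases hd : Ssum A α = α.card
      · simp [hd]
      · simp only [hd, if_false]
        have := hcon α
        have hlt : Ssum A α < α.card := lt_of_le_of_ne this hd
        linarith
  have hεpos : 0 < ε := lt_min hε1 hε2
  have hεA : ∀ x y, D x y ≠ 0 → ε ≤ A x y / 2 := by
    intro x y hd
    have hmem : (if D x y = 0 then (1:ℝ) else A x y / 2) ∈ s₁ := by
      apply Finset.mem_insert_of_mem
      exact Finset.mem_image.2 ⟨(x, y), Finset.mem_univ _, rfl⟩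
    have := Finset.min'_le s₁ _ hmem
    simp only [hd, if_false] at this
    exact le_trans (min_le_left _ _) this
  have hεα : ∀ α : Finset (Fin m), Ssum A α ≠ α.card → ε ≤ ((α.card : ℝ) - Ssum A α) / 2 := by
    intro α hd
    have hmem : (if Ssum A α = α.card then (1:ℝ) else ((α.card : ℝ) - Ssum A α) / 2) ∈ s₂ := by
      apply Finset.mem_insert_of_mem
      exact Finset.mem_image.2 ⟨α, Finset.mem_univ _, rfl⟩
    have := Finset.min'_le s₂ _ hmem
    simp only [hd, if_false] at this
    exact le_trans (min_le_right _ _) this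
  have hU : ∀ c : ℝ, |c| = ε → IsInU (A + c • D) := by
    intro c hc
    have hcabs : ∀ x y, |c * D x y| ≤ 2 * ε := by
      intro x y
      rw [abs_mul, hc]
      calc ε * |D x y| ≤ ε * 2 := mul_le_mul_of_nonneg_left (hent x y) (le_of_lt hεpos)
        _ = 2 * ε := by ring
    refine ⟨hsym.add (hDs.smul c), ?_, ?_⟩
    · intro x y
      by_cases hd : D x y = 0
      · simp [Matrix.add_apply, Matrix.smul_apply, hd, hpos x y]
      · have h1 := hεA x y hd
        have h2 := hcabs x y
        have h3 : -(2 * ε) ≤ c * D x y := neg_le_of_abs_le h2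
        have h4 := hsupp x y hd
        simp only [Matrix.add_apply, Matrix.smul_apply, smul_eq_mul]
        linarith
    · intro α
      have hsc : Ssum (A + c • D) α = Ssum A α + c * Ssum D α := by
        rw [Ssum_add, Ssum_smul]
      show Ssum (A + c • D) α ≤ (α.card : ℝ)
      rw [hsc]
      by_cases hd : Ssum A α = α.card
      · rw [htight α hd, hd]; simp
      · have h1 := hεα α hd
        have h2 : |c * Ssum D α| ≤ 2 * ε := by
          rw [abs_mul, hc]
          calc ε * |Ssum D α| ≤ ε * 2 := mul_le_mul_of_nonneg_left (hbd α) (le_of_lt hεpos)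
            _ = 2 * ε := by ring
        have h3 : c * Ssum D α ≤ 2 * ε := le_of_abs_le h2
        linarith
  intro hext
  have hUp := hU ε (abs_of_pos hεpos)
  have hUm := hU (-ε) (by rw [abs_neg, abs_of_pos hεpos])
  have hsum : (A + ε • D) + (A + (-ε) • D) = (2:ℝ) • A := by
    ext x y
    simp [Matrix.add_apply, Matrix.smul_apply, two_smul]
    ring
  obtain ⟨h1, _⟩ := hext.2 _ _ hUp hUm hsum
  have hz : ε • D = 0 := by
    have := congrArg (fun M => M - A) h1
    simpa [add_sub_cancel_left] using this
  have hD0 : D = 0 := by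
    ext x y
    have := congrFun (congrFun hz x) y
    simp only [Matrix.smul_apply, smul_eq_mul, Matrix.zero_apply] at this ⊢
    rcases mul_eq_zero.1 this with h | h
    · exact absurd h (ne_of_gt hεpos)
    · exact h
  exact hne hD0

lemma single_sum (α : Finset (Fin m)) (a b : Fin m) (v : ℝ) :
    ∑ x ∈ α, ∑ y ∈ α, (if x = a ∧ y = b then v else 0)
      = if a ∈ α ∧ b ∈ α then v else 0 := by
  have hinner : ∀ x, ∑ y ∈ α, (if x = a ∧ y = b then v else 0)
      = if x = a ∧ b ∈ α then v else 0 := by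
    intro x
    by_cases hx : x = a
    · simp only [hx, true_and]
      exact Finset.sum_ite_eq' α b (fun _ => v)
    · simp [hx]
  rw [Finset.sum_congr rfl (fun x _ => hinner x)]
  by_cases hb : b ∈ α
  · simp only [hb, and_true]
    exact Finset.sum_ite_eq' α a (fun _ => v)
  · simp [hb]

lemma pair_sum (α : Finset (Fin m)) (i j : Fin m) (v : ℝ) :
    ∑ x ∈ α, ∑ y ∈ α, (if (x = i ∧ y = j) ∨ (x = j ∧ y = i) then v else 0)
      = if i ∈ α ∧ j ∈ α then (if i = j then v else 2 * v) else 0 := by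
  by_cases hij : i = j
  · subst hij
    have h : ∀ x y : Fin m, (if (x = i ∧ y = i) ∨ (x = i ∧ y = i) then v else 0)
        = if x = i ∧ y = i then v else 0 := by
      intro x y; simp
    rw [Finset.sum_congr rfl fun x _ => Finset.sum_congr rfl fun y _ => h x y]
    rw [single_sum]
    simp
  · have h : ∀ x y : Fin m, (if (x = i ∧ y = j) ∨ (x = j ∧ y = i) then v else 0)
        = (if x = i ∧ y = j then v else 0) + (if x = j ∧ y = i then v else 0) := by
      intro x y
      by_cases h1 : x = i ∧ y = j <;> by_cases h2 : x = j ∧ y = i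
      · exact absurd (h1.1.symm.trans h2.1) hij
      · simp [h1, h2, hij]
      · simp [h1, h2, hij]
      · simp [h1, h2]
    rw [Finset.sum_congr rfl fun x _ => Finset.sum_congr rfl fun y _ => h x y]
    rw [Finset.sum_congr rfl fun x (_ : x ∈ α) => Finset.sum_add_distrib,
      Finset.sum_add_distrib, single_sum, single_sum]
    by_cases h1 : i ∈ α <;> by_cases h2 : j ∈ α <;> simp [h1, h2, hij] <;> ring

lemma swap_or_and {γ : Type*} (x y i j : γ) :
    ((y = i ∧ x = j) ∨ (y = j ∧ x = i)) ↔ ((x = i ∧ y = j) ∨ (x = j ∧ y = i)) := by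
  tauto

lemma abs_ite_sub_le (P Q : Prop) [Decidable P] [Decidable Q] (a b : ℝ)
    (ha : 0 < a) (ha2 : a ≤ 2) (hb : 0 < b) (hb2 : b ≤ 2) :
    |(if P then a else 0) - (if Q then b else 0)| ≤ 2 := by
  by_cases h1 : P <;> by_cases h2 : Q <;> simp only [h1, h2, if_true, if_false] <;>
    rw [abs_le] <;> constructor <;> simp <;> linarith

lemma aux_step {A : Matrix (Fin m) (Fin m) ℝ} (hA : IsInU A) (hext : IsExtremeIn IsInU A)
    {i j : Fin m} (ht : 0 < A i j) {β : Finset (Fin m)}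
    (hβt : Ssum A β = β.card) (hiβ : i ∈ β) (hjβ : j ∈ β)
    (hmin : ∀ γ : Finset (Fin m), Ssum A γ = γ.card → γ ⊆ β → i ∈ γ → j ∈ γ → γ = β)
    (hw : ∀ γ : Finset (Fin m), Ssum A γ = γ.card → γ ⊆ β → γ ≠ β → j ∉ γ) :
    ∃ d : ℕ, 0 < d ∧ (if i = j then (1:ℝ) else 2) * A i j = d := by
  obtain ⟨hsym, hpos, hcon⟩ := hA
  have hA' : IsInU A := ⟨hsym, hpos, hcon⟩
  set F : Finset (Finset (Fin m)) :=
    (univ : Finset (Finset (Fin m))).filter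
      (fun γ => Ssum A γ = γ.card ∧ γ ⊆ β ∧ γ ≠ β) with hF
  set U₀ : Finset (Fin m) := F.sup id with hU₀def
  have hUprop : ((U₀ ⊆ β ∧ j ∉ U₀) ∧ Ssum A U₀ = U₀.card) := by
    apply tight_sup hA' F (fun s => s ⊆ β ∧ j ∉ s)
    · exact ⟨Finset.empty_subset β, Finset.notMem_empty j⟩
    · intro γ hγ
      obtain ⟨ht', hsub, hne⟩ := (Finset.mem_filter.1 hγ).2
      exact ⟨⟨hsub, hw γ ht' hsub hne⟩, ht'⟩
    · rintro s t ⟨hs1, hs2⟩ ⟨ht1, ht2⟩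
      refine ⟨Finset.union_subset hs1 ht1, ?_⟩
      simp [Finset.mem_union, hs2, ht2]
  obtain ⟨⟨hU₀β, hjU₀⟩, hU₀t⟩ := hUprop
  have hsubU₀ : ∀ γ : Finset (Fin m), Ssum A γ = γ.card → γ ⊆ β → γ ≠ β → γ ⊆ U₀ := by
    intro γ h1 h2 h3
    have : γ ∈ F := Finset.mem_filter.2 ⟨Finset.mem_univ _, h1, h2, h3⟩
    exact Finset.le_sup (f := id) this
  have hU₀ne : U₀ ≠ β := fun h => hjU₀ (h ▸ hjβ)
  have hcardlt : U₀.card < β.card := Finset.card_lt_card ⟨hU₀β, fun h => hU₀ne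
    (Finset.Subset.antisymm hU₀β h)⟩
  by_cases hpq : ∃ p q : Fin m, p ∈ β ∧ q ∈ β ∧ ¬(p ∈ U₀ ∧ q ∈ U₀) ∧
      ¬(p = i ∧ q = j) ∧ ¬(p = j ∧ q = i) ∧ 0 < A p q
  · -- build a perturbation D, contradict extremality
    exfalso
    obtain ⟨p, q, hpβ, hqβ, hpqU, hne1, hne2, hApq⟩ := hpq
    set c₁ : ℝ := if i = j then 2 else 1 with hc₁
    set c₂ : ℝ := if p = q then 2 else 1 with hc₂
    have hc₁pos : 0 < c₁ := by rw [hc₁]; split <;> norm_num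
    have hc₂pos : 0 < c₂ := by rw [hc₂]; split <;> norm_num
    have hc₁le : c₁ ≤ 2 := by rw [hc₁]; split <;> norm_num
    have hc₂le : c₂ ≤ 2 := by rw [hc₂]; split <;> norm_num
    obtain ⟨D, hDapp⟩ : ∃ D : Matrix (Fin m) (Fin m) ℝ, ∀ x y,
        D x y = (if (x = i ∧ y = j) ∨ (x = j ∧ y = i) then c₁ else 0)
          - (if (x = p ∧ y = q) ∨ (x = q ∧ y = p) then c₂ else 0) :=
      ⟨fun x y => _, fun x y => rfl⟩
    have hDs : D.IsSymm := by
      refine Matrix.IsSymm.ext fun x y => ?_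
      rw [hDapp, hDapp]
      rw [if_congr (swap_or_and x y i j) rfl rfl, if_congr (swap_or_and x y p q) rfl rfl]
    have hDSsum : ∀ α : Finset (Fin m), Ssum D α =
        (if i ∈ α ∧ j ∈ α then (2:ℝ) else 0) - (if p ∈ α ∧ q ∈ α then (2:ℝ) else 0) := by
      intro α
      have e : Ssum D α = (∑ x ∈ α, ∑ y ∈ α, (if (x = i ∧ y = j) ∨ (x = j ∧ y = i) then c₁ else 0))
          - ∑ x ∈ α, ∑ y ∈ α, (if (x = p ∧ y = q) ∨ (x = q ∧ y = p) then c₂ else 0) := by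
        rw [Ssum]
        rw [Finset.sum_congr rfl fun x (_ : x ∈ α) => Finset.sum_congr rfl
          fun y (_ : y ∈ α) => hDapp x y]
        rw [Finset.sum_congr rfl fun x (_ : x ∈ α) => Finset.sum_sub_distrib _ _,
          Finset.sum_sub_distrib]
      rw [e, pair_sum, pair_sum]
      congr 1
      · rw [hc₁]; by_cases h : i = j <;> simp [h]
      · rw [hc₂]; by_cases h : p = q <;> simp [h]
    have htightD : ∀ α : Finset (Fin m), Ssum A α = α.card → Ssum D α = 0 := by
      intro α hαt
      rw [hDSsum]
      have hγt : Ssum A (α ∩ β) = (α ∩ β).card := (tight_closure hA' hαt hβt).2.1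
      by_cases hγ : α ∩ β = β
      · have hβα : β ⊆ α := by
          intro x hx
          have : x ∈ α ∩ β := by rw [hγ]; exact hx
          exact (Finset.mem_inter.1 this).1
        rw [if_pos ⟨hβα hiβ, hβα hjβ⟩, if_pos ⟨hβα hpβ, hβα hqβ⟩]
        ring
      · have hγU₀ : α ∩ β ⊆ U₀ := hsubU₀ _ hγt (Finset.inter_subset_right) hγ
        have hij' : ¬(i ∈ α ∧ j ∈ α) := by
          rintro ⟨_, hj'⟩
          exact hjU₀ (hγU₀ (Finset.mem_inter.2 ⟨hj', hjβ⟩))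
        have hpq' : ¬(p ∈ α ∧ q ∈ α) := by
          rintro ⟨hp', hq'⟩
          exact hpqU ⟨hγU₀ (Finset.mem_inter.2 ⟨hp', hpβ⟩),
            hγU₀ (Finset.mem_inter.2 ⟨hq', hqβ⟩)⟩
        rw [if_neg hij', if_neg hpq']
        ring
    have hsupp : ∀ x y, D x y ≠ 0 → 0 < A x y := by
      intro x y hd
      rw [hDapp] at hd
      by_cases h1 : (x = i ∧ y = j) ∨ (x = j ∧ y = i)
      · rcases h1 with ⟨rfl, rfl⟩ | ⟨rfl, rfl⟩
        · exact ht
        · rw [hsym.apply]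
          exact ht
      · by_cases h2 : (x = p ∧ y = q) ∨ (x = q ∧ y = p)
        · rcases h2 with ⟨rfl, rfl⟩ | ⟨rfl, rfl⟩
          · exact hApq
          · rw [hsym.apply]
            exact hApq
        · rw [if_neg h1, if_neg h2] at hd
          simp at hd
    have hent : ∀ x y, |D x y| ≤ 2 := by
      intro x y
      rw [hDapp]
      exact abs_ite_sub_le _ _ _ _ hc₁pos hc₁le hc₂pos hc₂le
    have hbd : ∀ α : Finset (Fin m), |Ssum D α| ≤ 2 := by
      intro α
      rw [hDSsum]
      exact abs_ite_sub_le _ _ _ _ (by norm_num) (by norm_num) (by norm_num) (by norm_num)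
    have hDne : D ≠ 0 := by
      intro h
      have hz : D i j = 0 := by rw [h]; rfl
      rw [hDapp] at hz
      have e1 : (i = i ∧ j = j) ∨ (i = j ∧ j = i) := Or.inl ⟨rfl, rfl⟩
      have e2 : ¬((i = p ∧ j = q) ∨ (i = q ∧ j = p)) := by
        rintro (⟨rfl, rfl⟩ | ⟨rfl, rfl⟩)
        · exact hne1 ⟨rfl, rfl⟩
        · exact hne2 ⟨rfl, rfl⟩
      rw [if_pos e1, if_neg e2] at hz
      linarith
    exact pert_not_extreme hA' hDs hsupp hent htightD hbd hDne hext
  · -- counting argument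
    push_neg at hpq
    have hzero : ∀ x y : Fin m, x ∈ β → y ∈ β → ¬(x ∈ U₀ ∧ y ∈ U₀) →
        ¬(x = i ∧ y = j) → ¬(x = j ∧ y = i) → A x y = 0 := by
      intro x y h1 h2 h3 h4 h5
      have := hpq x y h1 h2 (fun hx hy => h3 ⟨hx, hy⟩) (fun hx hy => h4 ⟨hx, hy⟩)
        (fun hx hy => h5 ⟨hx, hy⟩)
      linarith [hpos x y]
    have hcount : Ssum A β = Ssum A U₀ + (if i = j then A i j else 2 * A i j) := by
      have hpt : ∀ x y : Fin m, (if x ∈ β ∧ y ∈ β then A x y else 0)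
          = (if x ∈ U₀ ∧ y ∈ U₀ then A x y else 0)
            + (if (x = i ∧ y = j) ∨ (x = j ∧ y = i) then A i j else 0) := by
        intro x y
        by_cases hp1 : (x = i ∧ y = j) ∨ (x = j ∧ y = i)
        · have hU0f : ¬(x ∈ U₀ ∧ y ∈ U₀) := by
            rintro ⟨hx, hy⟩
            rcases hp1 with ⟨rfl, rfl⟩ | ⟨rfl, rfl⟩
            · exact hjU₀ hy
            · exact hjU₀ hx
          have hval : A x y = A i j := by
            rcases hp1 with ⟨rfl, rfl⟩ | ⟨rfl, rfl⟩
            · rfl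
            · rw [hsym.apply]
          have hmem : x ∈ β ∧ y ∈ β := by
            rcases hp1 with ⟨rfl, rfl⟩ | ⟨rfl, rfl⟩
            · exact ⟨hiβ, hjβ⟩
            · exact ⟨hjβ, hiβ⟩
          rw [if_pos hmem, if_neg hU0f, if_pos hp1, hval]
          ring
        · rw [if_neg hp1]
          by_cases hm : x ∈ β ∧ y ∈ β
          · rw [if_pos hm]
            by_cases hu : x ∈ U₀ ∧ y ∈ U₀
            · rw [if_pos hu]; ring
            · rw [if_neg hu]
              have := hzero x y hm.1 hm.2 hu
                (fun h => hp1 (Or.inl h)) (fun h => hp1 (Or.inr h))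
              rw [this]; ring
          · have hu : ¬(x ∈ U₀ ∧ y ∈ U₀) := by
              rintro ⟨hx, hy⟩
              exact hm ⟨hU₀β hx, hU₀β hy⟩
            rw [if_neg hm, if_neg hu]; ring
      have hps : ∑ x : Fin m, ∑ y : Fin m,
          (if (x = i ∧ y = j) ∨ (x = j ∧ y = i) then A i j else 0)
          = if i = j then A i j else 2 * A i j := by
        rw [pair_sum]
        simp
      rw [Ssum_eq_univ A β, Ssum_eq_univ A U₀, ← hps]
      rw [Finset.sum_congr rfl fun x _ => Finset.sum_congr rfl fun y _ => hpt x y]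
      rw [Finset.sum_congr rfl fun x (_ : x ∈ (univ : Finset (Fin m))) => Finset.sum_add_distrib,
        Finset.sum_add_distrib]
    refine ⟨β.card - U₀.card, by omega, ?_⟩
    have hcast : ((β.card - U₀.card : ℕ) : ℝ) = (β.card : ℝ) - (U₀.card : ℝ) := by
      rw [Nat.cast_sub (le_of_lt hcardlt)]
    rw [hcast]
    have hfin : (if i = j then A i j else 2 * A i j) = (β.card : ℝ) - (U₀.card : ℝ) := by
      rw [← hβt, ← hU₀t, hcount]; ring
    rw [← hfin]
    by_cases h : i = j <;> simp [h]

lemma key_lemma {A : Matrix (Fin m) (Fin m) ℝ} (hext : IsExtremeIn IsInU A)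
    {i j : Fin m} (ht : 0 < A i j) :
    ∃ d : ℕ, 0 < d ∧ (if i = j then (1:ℝ) else 2) * A i j = d := by
  obtain ⟨hsym, hpos, hcon⟩ := hext.1
  have hA' : IsInU A := ⟨hsym, hpos, hcon⟩
  by_cases hP : ∃ α : Finset (Fin m), Ssum A α = α.card ∧ i ∈ α ∧ j ∈ α
  · -- pick a minimal-cardinality tight set containing i and j
    set P' : Finset (Finset (Fin m)) :=
      (univ : Finset (Finset (Fin m))).filter
        (fun α => Ssum A α = α.card ∧ i ∈ α ∧ j ∈ α) with hP'
    have hP'ne : P'.Nonempty := by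
      obtain ⟨α, h1, h2, h3⟩ := hP
      exact ⟨α, Finset.mem_filter.2 ⟨Finset.mem_univ _, h1, h2, h3⟩⟩
    obtain ⟨β, hβmem, hβmin⟩ := Finset.exists_min_image P' Finset.card hP'ne
    obtain ⟨hβt, hiβ, hjβ⟩ := (Finset.mem_filter.1 hβmem).2
    have hmin : ∀ γ : Finset (Fin m), Ssum A γ = γ.card → γ ⊆ β → i ∈ γ → j ∈ γ → γ = β := by
      intro γ h1 h2 h3 h4
      have hγm : γ ∈ P' := Finset.mem_filter.2 ⟨Finset.mem_univ _, h1, h3, h4⟩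
      exact Finset.eq_of_subset_of_card_le h2 (hβmin γ hγm)
    by_cases hw : ∀ γ : Finset (Fin m), Ssum A γ = γ.card → γ ⊆ β → γ ≠ β → j ∉ γ
    · exact aux_step hA' hext ht hβt hiβ hjβ hmin hw
    · push_neg at hw
      obtain ⟨γ₁, hγ₁t, hγ₁β, hγ₁ne, hjγ₁⟩ := hw
      have hiγ₁ : i ∉ γ₁ := by
        intro hi
        exact hγ₁ne (hmin γ₁ hγ₁t hγ₁β hi hjγ₁)
      have hw' : ∀ γ : Finset (Fin m), Ssum A γ = γ.card → γ ⊆ β → γ ≠ β → i ∉ γ := by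
        intro γ₂ hγ₂t hγ₂β hγ₂ne hiγ₂
        have hjγ₂ : j ∉ γ₂ := by
          intro hj
          exact hγ₂ne (hmin γ₂ hγ₂t hγ₂β hiγ₂ hj)
        have := (tight_closure hA' hγ₂t hγ₁t).2.2 i
          (Finset.mem_sdiff.2 ⟨hiγ₂, hiγ₁⟩) j (Finset.mem_sdiff.2 ⟨hjγ₁, hjγ₂⟩)
        linarith
      have hmin' : ∀ γ : Finset (Fin m), Ssum A γ = γ.card → γ ⊆ β → j ∈ γ → i ∈ γ → γ = β :=
        fun γ h1 h2 h3 h4 => hmin γ h1 h2 h4 h3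
      have ht' : 0 < A j i := by
        rw [hsym.apply]; exact ht
      obtain ⟨d, hd, hde⟩ := aux_step hA' hext ht' hβt hjβ hiβ hmin' hw'
      refine ⟨d, hd, ?_⟩
      rw [← hde, hsym.apply]
      by_cases h : i = j
      · simp [h]
      · have h' : ¬ j = i := fun e => h e.symm
        simp [h, h']
  · -- no tight set contains both i and j: simple perturbation
    exfalso
    push_neg at hP
    obtain ⟨D, hDapp⟩ : ∃ D : Matrix (Fin m) (Fin m) ℝ, ∀ x y,
        D x y = if (x = i ∧ y = j) ∨ (x = j ∧ y = i) then (1:ℝ) else 0 :=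
      ⟨fun x y => _, fun x y => rfl⟩
    have hDs : D.IsSymm := by
      refine Matrix.IsSymm.ext fun x y => ?_
      rw [hDapp, hDapp]
      rw [if_congr (swap_or_and x y i j) rfl rfl]
    have hsupp : ∀ x y, D x y ≠ 0 → 0 < A x y := by
      intro x y hd
      rw [hDapp] at hd
      by_cases h1 : (x = i ∧ y = j) ∨ (x = j ∧ y = i)
      · rcases h1 with ⟨rfl, rfl⟩ | ⟨rfl, rfl⟩
        · exact ht
        · rw [hsym.apply]; exact ht
      · rw [if_neg h1] at hd
        simp at hd
    have hent : ∀ x y, |D x y| ≤ 2 := by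
      intro x y
      rw [hDapp]
      by_cases h1 : (x = i ∧ y = j) ∨ (x = j ∧ y = i)
      · rw [if_pos h1]; rw [abs_le]; norm_num
      · rw [if_neg h1]; rw [abs_le]; norm_num
    have hDSsum : ∀ α : Finset (Fin m), Ssum D α =
        if i ∈ α ∧ j ∈ α then (if i = j then (1:ℝ) else 2 * 1) else 0 := by
      intro α
      rw [Ssum]
      rw [Finset.sum_congr rfl fun x (_ : x ∈ α) => Finset.sum_congr rfl
        fun y (_ : y ∈ α) => hDapp x y]
      exact pair_sum α i j 1
    have htightD : ∀ α : Finset (Fin m), Ssum A α = α.card → Ssum D α = 0 := by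
      intro α hαt
      rw [hDSsum]
      have : ¬(i ∈ α ∧ j ∈ α) := fun h => hP α hαt h.1 h.2
      rw [if_neg this]
    have hbd : ∀ α : Finset (Fin m), |Ssum D α| ≤ 2 := by
      intro α
      rw [hDSsum]
      by_cases h1 : i ∈ α ∧ j ∈ α
      · rw [if_pos h1]
        by_cases h : i = j <;> [rw [if_pos h]; rw [if_neg h]] <;> rw [abs_le] <;> norm_num
      · rw [if_neg h1]; rw [abs_le]; norm_num
    have hDne : D ≠ 0 := by
      intro h
      have hz : D i j = 0 := by rw [h]; rfl
      rw [hDapp, if_pos (Or.inl ⟨rfl, rfl⟩)] at hz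
      linarith
    exact pert_not_extreme hA' hDs hsupp hent htightD hbd hDne hext


end Stmt10Aux

open Stmt10Aux in
theorem stmt_10 {m : ℕ} (A : Matrix (Fin m) (Fin m) ℝ)
    (hA : IsExtremeIn IsInU A) :
    (∀ i, A i i = 0 ∨ A i i = 1) ∧
      (∀ i j, i ≠ j → A i j = 0 ∨ A i j = 1/2 ∨ A i j = 1) := by
  obtain ⟨hsym, hpos, hcon⟩ := hA.1
  constructor
  · intro i
    by_cases h0 : A i i = 0
    · exact Or.inl h0
    · right
      have ht : 0 < A i i := lt_of_le_of_ne (hpos i i) (Ne.symm h0)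
      obtain ⟨d, hd, hde⟩ := key_lemma hA ht
      rw [if_pos rfl, one_mul] at hde
      have hle : A i i ≤ 1 := by
        have := hcon {i}
        simpa using this
      have : (1:ℝ) ≤ d := by exact_mod_cast Nat.one_le_cast.2 hd
      linarith [hde ▸ hle]
  · intro i j hij
    by_cases h0 : A i j = 0
    · exact Or.inl h0
    · right
      have ht : 0 < A i j := lt_of_le_of_ne (hpos i j) (Ne.symm h0)
      obtain ⟨d, hd, hde⟩ := key_lemma hA ht
      rw [if_neg hij] at hde
      have hle : 2 * A i j ≤ 2 := by
        have h2 := hcon {i, j}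
        have hcard : ({i, j} : Finset (Fin m)).card = 2 := Finset.card_pair hij
        rw [hcard] at h2
        have hexp : ∑ p ∈ ({i, j} : Finset (Fin m)), ∑ q ∈ ({i, j} : Finset (Fin m)), A p q
            = A i i + A i j + (A j i + A j j) := by
          rw [Finset.sum_pair hij, Finset.sum_pair hij, Finset.sum_pair hij]
        rw [hexp] at h2
        have hsji : A i j = A j i := hsym.apply j i
        have := hpos i i
        have := hpos j j
        push_cast at h2
        linarith
      have hd1 : (1:ℝ) ≤ d := by exact_mod_cast Nat.one_le_cast.2 hd
      have hd2 : (d:ℝ) ≤ 2 := by rw [← hde]; linarith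
      have : d = 1 ∨ d = 2 := by
        have : (d:ℝ) = 1 ∨ (d:ℝ) = 2 := by
          have hd2' : d ≤ 2 := by exact_mod_cast hd2
          interval_cases d
          · left; norm_num
          · right; norm_num
        exact_mod_cast this
      rcases this with h | h
      · left
        rw [h] at hde
        push_cast at hde
        linarith
      · right
        rw [h] at hde
        push_cast at hde
        linarith
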